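/- Garman–Kohlhagen call formula: for S₀ > 0, K > 0, T > 0, σ > 0 and r_d, r_f ∈ ℝ, the discounted Gaussian integral ∫_ℝ e^{-r_d T} · max(S₀ · exp((r_d − r_f − σ²/2)T + σ√T·z) − K, 0) · (1/√(2π)) e^{-z²/2} dz equals S₀ e^{-r_f T} N(d₁) − K e^{-r_d T} N(d₂), where d₁ = (ln(S₀/K) + (r_d − r_f + σ²/2)T)/(σ√T) and d₂ = d₁ − σ√T. -/

import Mathlib

noncomputable def stdNormalCdf (z : ℝ) : ℝ :=
  ∫ x in Set.Iic z, (1 / Real.sqrt (2 * Real.pi)) * Real.exp (-x ^ 2 / 2)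

open MeasureTheory Real Set

noncomputable def φ (z : ℝ) : ℝ := 1 / Real.sqrt (2 * Real.pi) * Real.exp (-z ^ 2 / 2)

lemma φ_neg (x : ℝ) : φ (-x) = φ x := by simp [φ]

lemma integrable_φ : Integrable φ := by
  have key : φ = fun z : ℝ => 1 / Real.sqrt (2 * Real.pi) * Real.exp (-(1/2) * z ^ 2) := by
    funext z; simp only [φ]; congr 1; ring_nf
  rw [key]
  exact (integrable_exp_neg_mul_sq (by norm_num)).const_mul _

lemma cdf_def (a : ℝ) : stdNormalCdf a = ∫ z in Iic a, φ z := rfl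

lemma compl_eq (a : ℝ) : ∫ z in Ioi a, φ z = stdNormalCdf (-a) := by
  have h1 : (∫ x in Iic (-a), φ (-x)) = ∫ x in Ioi (-(-a)), φ x :=
    integral_comp_neg_Iic (-a) φ
  simp only [φ_neg, neg_neg] at h1
  rw [← h1, cdf_def]

lemma shift_eq (a s : ℝ) : ∫ z in Ioi a, φ (z - s) = stdNormalCdf (s - a) := by
  have h : (fun z : ℝ => (Ioi a).indicator (fun z => φ (z - s)) z)
      = fun z => (Ioi (a - s)).indicator φ (z - s) := by
    funext z
    simp only [indicator_apply, mem_Ioi, sub_lt_sub_iff_right]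
  rw [← integral_indicator measurableSet_Ioi, h,
      integral_sub_right_eq_self ((Ioi (a - s)).indicator φ) s,
      integral_indicator measurableSet_Ioi, compl_eq]
  congr 1; ring_nf

lemma expshift (s z : ℝ) :
    Real.exp (s * z) * φ z = Real.exp (s ^ 2 / 2) * φ (z - s) := by
  have h : Real.exp (s * z) * Real.exp (-z ^ 2 / 2)
      = Real.exp (s ^ 2 / 2) * Real.exp (-(z - s) ^ 2 / 2) := by
    rw [← Real.exp_add, ← Real.exp_add]; congr 1; ring
  simp only [φ]
  calc Real.exp (s*z) * (1 / Real.sqrt (2*Real.pi) * Real.exp (-z^2/2))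
      = 1 / Real.sqrt (2*Real.pi) * (Real.exp (s*z) * Real.exp (-z^2/2)) := by ring
    _ = 1 / Real.sqrt (2*Real.pi) * (Real.exp (s^2/2) * Real.exp (-(z-s)^2/2)) := by rw [h]
    _ = Real.exp (s^2/2) * (1 / Real.sqrt (2*Real.pi) * Real.exp (-(z-s)^2/2)) := by ring

lemma integrable_expshift (s : ℝ) : Integrable (fun z => Real.exp (s * z) * φ z) := by
  have h : Integrable (fun z : ℝ => Real.exp (s^2/2) * φ (z - s)) :=
    ((integrable_φ).comp_sub_right s).const_mul _
  exact h.congr (ae_of_all _ fun z => (expshift s z).symm)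

lemma exp_integral (a s : ℝ) :
    ∫ z in Ioi a, Real.exp (s * z) * φ z = Real.exp (s ^ 2 / 2) * stdNormalCdf (s - a) := by
  simp_rw [expshift]
  rw [integral_const_mul, shift_eq]

/-- Garman–Kohlhagen call formula. -/
theorem garman_kohlhagen_call (S₀ K T σ rd rf : ℝ)
    (hS : 0 < S₀) (hK : 0 < K) (hT : 0 < T) (hσ : 0 < σ) :
    (∫ z : ℝ,
        Real.exp (-rd * T) *
          max (S₀ * Real.exp ((rd - rf - σ ^ 2 / 2) * T + σ * Real.sqrt T * z) - K) 0 *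
          (1 / Real.sqrt (2 * Real.pi) * Real.exp (-z ^ 2 / 2))) =
      S₀ * Real.exp (-rf * T) *
          stdNormalCdf
            ((Real.log (S₀ / K) + (rd - rf + σ ^ 2 / 2) * T) / (σ * Real.sqrt T)) -
        K * Real.exp (-rd * T) *
          stdNormalCdf
            ((Real.log (S₀ / K) + (rd - rf + σ ^ 2 / 2) * T) / (σ * Real.sqrt T) -
              σ * Real.sqrt T) := by
  have hs : 0 < σ * Real.sqrt T := mul_pos hσ (Real.sqrt_pos.mpr hT)
  set s := σ * Real.sqrt T with hs_def
  set m := (rd - rf - σ ^ 2 / 2) * T with hm_def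
  have hsq : s ^ 2 = σ ^ 2 * T := by
    rw [hs_def, mul_pow, Real.sq_sqrt hT.le]
  set a := (Real.log (K / S₀) - m) / s with ha_def
  set c := Real.exp (-rd * T) with hc_def
  -- threshold characterization
  have hiff : ∀ z : ℝ, S₀ * Real.exp (m + s * z) ≤ K ↔ z ≤ a := by
    intro z
    rw [ha_def, le_div_iff₀ hs, ← sub_nonneg]
    constructor
    · intro h
      have h1 : Real.exp (m + s * z) ≤ K / S₀ := by
        rw [le_div_iff₀ hS]; linarith [mul_comm (Real.exp (m + s * z)) S₀]
      have h2 : m + s * z ≤ Real.log (K / S₀) := by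
        rw [← Real.log_exp (m + s * z)]
        exact Real.log_le_log (Real.exp_pos _) h1
      linarith
    · intro h
      have h2 : m + s * z ≤ Real.log (K / S₀) := by linarith
      have h1 : Real.exp (m + s * z) ≤ K / S₀ := by
        calc Real.exp (m + s * z) ≤ Real.exp (Real.log (K / S₀)) := Real.exp_le_exp.mpr h2
          _ = K / S₀ := Real.exp_log (div_pos hK hS)
      have := (le_div_iff₀ hS).mp h1
      linarith [mul_comm (Real.exp (m + s * z)) S₀]
  have hT2 : Real.sqrt T ^ 2 = T := Real.sq_sqrt hT.le
  have hiff' : ∀ z : ℝ, K ≤ S₀ * Real.exp (m + s * z) ↔ a ≤ z := by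
    intro z
    rw [ha_def, div_le_iff₀ hs]
    constructor
    · intro h
      have h1 : K / S₀ ≤ Real.exp (m + s * z) := by
        rw [div_le_iff₀ hS]; linarith [mul_comm (Real.exp (m + s * z)) S₀]
      have h2 : Real.log (K / S₀) ≤ m + s * z := by
        calc Real.log (K / S₀) ≤ Real.log (Real.exp (m + s * z)) :=
              Real.log_le_log (div_pos hK hS) h1
          _ = m + s * z := Real.log_exp _
      linarith
    · intro h
      have h2 : Real.log (K / S₀) ≤ m + s * z := by linarith
      have h1 : K / S₀ ≤ Real.exp (m + s * z) := by
        calc K / S₀ = Real.exp (Real.log (K / S₀)) := (Real.exp_log (div_pos hK hS)).symm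
          _ ≤ _ := Real.exp_le_exp.mpr h2
      have := (div_le_iff₀ hS).mp h1
      linarith [mul_comm (Real.exp (m + s * z)) S₀]
  -- rewrite integrand using indicator
  have hrep : (fun z : ℝ =>
        c * max (S₀ * Real.exp (m + s * z) - K) 0 *
          (1 / Real.sqrt (2 * Real.pi) * Real.exp (-z ^ 2 / 2)))
      = (Ici a).indicator (fun z => c * (S₀ * Real.exp (m + s * z) - K) * φ z) := by
    funext z
    by_cases hz : a ≤ z
    · rw [indicator_of_mem (mem_Ici.mpr hz)]
      have h0 : K ≤ S₀ * Real.exp (m + s * z) := (hiff' z).mpr hz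
      rw [max_eq_left (by linarith : (0:ℝ) ≤ S₀ * Real.exp (m + s * z) - K)]
      rfl
    · rw [indicator_of_notMem (fun h => hz (mem_Ici.mp h))]
      have h0 : S₀ * Real.exp (m + s * z) - K ≤ 0 := by
        have := (hiff z).mpr (le_of_lt (lt_of_not_ge hz))
        linarith
      rw [max_eq_right h0, mul_zero, zero_mul]
  rw [hrep, integral_indicator measurableSet_Ici, integral_Ici_eq_integral_Ioi]
  -- split the integrand
  have hsplit : ∀ z : ℝ, c * (S₀ * Real.exp (m + s * z) - K) * φ z
      = (c * S₀ * Real.exp m) * (Real.exp (s * z) * φ z) - (c * K) * φ z := by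
    intro z
    rw [Real.exp_add]
    ring
  simp_rw [hsplit]
  rw [integral_sub (((integrable_expshift s).integrableOn).const_mul _)
      ((integrable_φ.integrableOn).const_mul _),
    integral_const_mul, integral_const_mul, exp_integral, compl_eq]
  have harg1 : s - a = (Real.log (S₀ / K) + (rd - rf + σ ^ 2 / 2) * T) / s := by
    rw [ha_def, hm_def, Real.log_div hK.ne' hS.ne', Real.log_div hS.ne' hK.ne', hs_def]
    field_simp
    linear_combination (2 * σ ^ 2) * hT2
  have harg2 : -a = (Real.log (S₀ / K) + (rd - rf + σ ^ 2 / 2) * T) / s - s := by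
    rw [ha_def, hm_def, Real.log_div hK.ne' hS.ne', Real.log_div hS.ne' hK.ne', hs_def]
    field_simp
    linear_combination (2 * σ ^ 2) * hT2
  have hcoef : c * S₀ * Real.exp m * Real.exp (s ^ 2 / 2) = S₀ * Real.exp (-rf * T) := by
    have hexp : -rd * T + ((rd - rf - σ ^ 2 / 2) * T + s ^ 2 / 2) = -rf * T := by
      rw [hs_def]
      linear_combination (σ ^ 2 / 2) * hT2
    calc c * S₀ * Real.exp m * Real.exp (s ^ 2 / 2)
        = S₀ * (Real.exp (-rd * T) * (Real.exp ((rd - rf - σ ^ 2 / 2) * T) *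
            Real.exp (s ^ 2 / 2))) := by rw [hc_def, hm_def]; ring
      _ = S₀ * Real.exp (-rd * T + ((rd - rf - σ ^ 2 / 2) * T + s ^ 2 / 2)) := by
            rw [← Real.exp_add, ← Real.exp_add]
      _ = S₀ * Real.exp (-rf * T) := by rw [hexp]
  rw [harg1, harg2]
  linear_combination
    (stdNormalCdf ((Real.log (S₀ / K) + (rd - rf + σ ^ 2 / 2) * T) / s)) * hcoef
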